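/- arXiv:2503.19483 — 2 statements merged into one kernel-verified Lean document; each statement's English description precedes it below -/
import Mathlib

section
/- Let E be a real vector space and let P, Q be linear endomorphisms of E with P∘P = P, Q∘Q = Q, P∘Q = Q∘P = 0, and P + Q = id. Let d, B, Δλ, κ, μ be real numbers with 1 + (1−d)·(1−B)·2μ·Δλ ≠ 0, and let x ∈ E. Then σ := (1−d)·(3κ·P + (2μ / (1 + (1−d)(1−B)·2μ·Δλ))·Q)(x) is the unique element of E satisfying the implicit relation σ = (1−d)·(3κ·P + 2μ·Q)(x − (1−B)·Δλ·Q(σ)). -/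
/-- In the ImplEx integration of the viscoelastic-viscoplastic-damage model,
the implicit linear relation
`σ = (1−d)·(3κ·P + 2μ·Q)(x − (1−B)·Δlam·Q(σ))`
has the unique solution
`σ = (1−d)·(3κ·P + (2μ / (1 + (1−d)(1−B)·2μ·Δlam))·Q)(x)`. -/
theorem implex_stress_explicit_unique
    (E : Type*) [AddCommGroup E] [Module ℝ E]
    (P Q : Module.End ℝ E)
    (hP : P * P = P) (hQ : Q * Q = Q)
    (hPQ : P * Q = 0) (hQP : Q * P = 0)
    (hsum : P + Q = 1)
    (d B Δlam κ μ : ℝ)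
    (hden : 1 + (1 - d) * (1 - B) * 2 * μ * Δlam ≠ 0)
    (x : E) :
    ((1 - d) • (((3 * κ) • P +
        (2 * μ / (1 + (1 - d) * (1 - B) * 2 * μ * Δlam)) • Q) x) =
      (1 - d) • (((3 * κ) • P + (2 * μ) • Q)
        (x - ((1 - B) * Δlam) • Q ((1 - d) • (((3 * κ) • P +
          (2 * μ / (1 + (1 - d) * (1 - B) * 2 * μ * Δlam)) • Q) x))))) ∧
    (∀ s : E,
      s = (1 - d) • (((3 * κ) • P + (2 * μ) • Q) (x - ((1 - B) * Δlam) • Q s)) →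
      s = (1 - d) • (((3 * κ) • P +
        (2 * μ / (1 + (1 - d) * (1 - B) * 2 * μ * Δlam)) • Q) x)) := by
  have hQPx : ∀ v : E, Q (P v) = 0 := fun v => by
    rw [← Module.End.mul_apply, hQP]; rfl
  have hPQx : ∀ v : E, P (Q v) = 0 := fun v => by
    rw [← Module.End.mul_apply, hPQ]; rfl
  have hQQx : ∀ v : E, Q (Q v) = Q v := fun v => by
    rw [← Module.End.mul_apply, hQ]
  have hPPx : ∀ v : E, P (P v) = P v := fun v => by
    rw [← Module.End.mul_apply, hP]
  constructor
  · simp only [LinearMap.add_apply, LinearMap.smul_apply, map_add, map_smul, map_sub,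
      hQPx, hPQx, hQQx, hPPx, smul_zero, add_zero, zero_add, smul_sub, smul_smul]
    match_scalars <;> field_simp [show (1 + (1 - d) * 2 * μ * (1 - B) * Δlam) ≠ 0 from by convert hden using 1; ring] <;> ring
  · intro s hs
    have h1 : Q s = Q ((1 - d) • (((3 * κ) • P + (2 * μ) • Q)
        (x - ((1 - B) * Δlam) • Q s))) := congrArg Q hs
    simp only [LinearMap.add_apply, LinearMap.smul_apply, map_add, map_smul, map_sub,
      hQPx, hPQx, hQQx, hPPx, smul_zero, add_zero, zero_add, smul_sub, smul_smul] at h1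
    have h2 : (1 + (1 - d) * (1 - B) * 2 * μ * Δlam) • Q s
        = ((1 - d) * (2 * μ)) • Q x := by
      rw [add_smul, one_smul]
      nth_rewrite 1 [h1]
      module
    have h3 : Q s = (((1 - d) * (2 * μ)) / (1 + (1 - d) * (1 - B) * 2 * μ * Δlam)) • Q x := by
      rw [div_eq_inv_mul, ← smul_smul, ← h2, smul_smul, inv_mul_cancel₀ hden, one_smul]
    rw [hs, h3]
    simp only [LinearMap.add_apply, LinearMap.smul_apply, map_add, map_smul, map_sub,
      hQPx, hPQx, hQQx, hPPx, smul_zero, add_zero, zero_add, smul_sub, smul_smul]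
    match_scalars <;> field_simp [show (1 + (1 - d) * 2 * μ * (1 - B) * Δlam) ≠ 0 from by convert hden using 1; ring] <;> ring
end

section
/- Let E be a real inner product space and define the von Mises equivalent norm vM(y) := √((3/2)·⟪y,y⟫). Let μ > 0, d < 1, B ≤ 1, Δr ≥ 0 and y ∈ E. Suppose s ∈ E with σ_eq := vM(s) > 0 satisfies the implicitly discretized relation s = 2μ(1−d)·( y − (1−B)·(3Δr / (2·σ_eq·(1−d)))·s ). Then: (i) s·(σ_eq + 3μ(1−B)Δr) = 2μ(1−d)·σ_eq·y, i.e. s = 2μ(1−d)·(σ_eq / (σ_eq + 3μ(1−B)Δr))·y whenever σ_eq + 3μ(1−B)Δr ≠ 0; and (ii) σ_eq = 2μ(1−d)·vM(y) − 3μ(1−B)·Δr. -/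
/-- Return-mapping for the deviatoric stress: if `s` with `σ_eq = vM(s) > 0`
satisfies the implicitly discretized relation
`s = 2μ(1−d)·(y − (1−B)·(3Δr/(2σ_eq(1−d)))·s)`, then
(i) `(σ_eq + 3μ(1−B)Δr)·s = 2μ(1−d)σ_eq·y`, with the explicit form whenever
the denominator is nonzero, and (ii) `σ_eq = 2μ(1−d)·vM(y) − 3μ(1−B)Δr`. -/
theorem von_mises_return_mapping
    (E : Type*) [NormedAddCommGroup E] [InnerProductSpace ℝ E]
    (μ d B Δr : ℝ)
    (hμ : 0 < μ) (hd : d < 1) (hB : B ≤ 1) (hΔr : 0 ≤ Δr)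
    (y s : E) (σeq : ℝ)
    (hσeq : σeq = Real.sqrt ((3 / 2) * (inner ℝ s s : ℝ)))
    (hpos : 0 < σeq)
    (hs : s = (2 * μ * (1 - d)) •
      (y - ((1 - B) * (3 * Δr / (2 * σeq * (1 - d)))) • s)) :
    ((σeq + 3 * μ * (1 - B) * Δr) • s = (2 * μ * (1 - d) * σeq) • y) ∧
    (σeq + 3 * μ * (1 - B) * Δr ≠ 0 →
      s = (2 * μ * (1 - d) * (σeq / (σeq + 3 * μ * (1 - B) * Δr))) • y) ∧
    (σeq = 2 * μ * (1 - d) * Real.sqrt ((3 / 2) * (inner ℝ y y : ℝ)) -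
      3 * μ * (1 - B) * Δr) := by
  have h1d : (1 : ℝ) - d ≠ 0 := by linarith
  have h1d' : (0 : ℝ) < 1 - d := by linarith
  have hσ : σeq ≠ 0 := ne_of_gt hpos
  set c : ℝ := 3 * μ * (1 - B) * Δr with hc
  have hcnn : 0 ≤ c := by
    have : 0 ≤ 1 - B := by linarith
    positivity
  -- Part (i)
  have key : (σeq + c) • s = (2 * μ * (1 - d) * σeq) • y := by
    have h2 := congrArg (fun x : E => σeq • x) hs
    simp only [smul_sub, smul_smul] at h2
    have hC : σeq * (2 * μ * (1 - d) * ((1 - B) * (3 * Δr / (2 * σeq * (1 - d)))))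
        = c := by
      field_simp
      ring
    rw [hC] at h2
    rw [add_smul, h2]
    module
  refine ⟨key, ?_, ?_⟩
  · intro hne
    have : s = (1 / (σeq + c)) • ((σeq + c) • s) := by
      rw [smul_smul]
      field_simp
      rw [one_smul]
    rw [this, key, smul_smul]
    congr 1
    field_simp
  · -- Part (ii)
    have hss : (inner ℝ s s : ℝ) = (2 / 3) * σeq ^ 2 := by
      have hnn : (0 : ℝ) ≤ (3 / 2) * (inner ℝ s s : ℝ) := by
        have := real_inner_self_nonneg (x := s)
        positivity
      have := Real.sq_sqrt hnn
      rw [← hσeq] at this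
      linarith
    have hin := congrArg (fun x : E => (inner ℝ x x : ℝ)) key
    simp only [real_inner_smul_left, real_inner_smul_right] at hin
    -- hin : (σeq+c) * ((σeq+c) * ⟪s,s⟫) = k * (k * ⟪y,y⟫)
    have hq : (3 / 2) * (inner ℝ y y : ℝ) = ((σeq + c) / (2 * μ * (1 - d))) ^ 2 := by
      rw [hss] at hin
      have hk : (2 * μ * (1 - d)) ≠ 0 := by positivity
      have h4 : σeq ^ 2 * ((σeq + c) ^ 2 * 2)
          = σeq ^ 2 * (3 * (2 * μ * (1 - d)) ^ 2 * (inner ℝ y y : ℝ)) := by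
        linear_combination 3 * hin
      have h3 := mul_left_cancel₀ (pow_ne_zero 2 hσ) h4
      field_simp
      linear_combination (-1/2 : ℝ) * h3
    have hsqrt : Real.sqrt ((3 / 2) * (inner ℝ y y : ℝ))
        = (σeq + c) / (2 * μ * (1 - d)) := by
      rw [hq, Real.sqrt_sq]
      positivity
    rw [hsqrt]
    field_simp
    ring
end
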